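/- arXiv:1602.01910 — 2 statements merged into one kernel-verified Lean document; each statement's English description precedes it below -/
import Mathlib

section
/- Let n ≥ 1, a : Fin n → ℝ, d : Fin n → ℝ with d i > 0 for all i, σ > 0, b > 0, and let τ ∈ ℝ. Define x* : Fin n → ℝ by x* i = max(0, min(b, −(a i + σ·τ)/(σ · d i))), and suppose τ is a root of F, i.e., τ = Σ_i x* i. Then x* satisfies the first-order KKT condition in projection form for minimizing f(x) = Σ_i a_i x_i + (σ/2) Σ_i d_i x_i² + (σ/2)(Σ_i x_i)² over the box [0,b]ⁿ: for every i, x* i = max(0, min(b, x* i − (a i + σ · d i · x* i + σ · (Σ_j x* j)))). -/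
/-- Lemma of Section 4.2: if `x*_i = max 0 (min b (-(a_i + στ)/(σ d_i)))` and
`τ = Σ_i x*_i` (i.e. `τ` is a root of `F`), then `x*` satisfies the first-order KKT
condition in projection form for minimizing
`f(x) = Σ a_i x_i + (σ/2) Σ d_i x_i² + (σ/2)(Σ x_i)²` over the box `[0,b]ⁿ`. -/
theorem root_gives_projection_KKT
    (n : ℕ) (hn : 1 ≤ n) (a d : Fin n → ℝ) (hd : ∀ i, 0 < d i)
    (σ b τ : ℝ) (hσ : 0 < σ) (hb : 0 < b)
    (xs : Fin n → ℝ)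
    (hxs : ∀ i, xs i = max 0 (min b (-(a i + σ * τ) / (σ * d i))))
    (hτ : τ = ∑ i, xs i) :
    ∀ i, xs i = max 0 (min b (xs i - (a i + σ * d i * xs i + σ * ∑ j, xs j))) := by
  intro i
  have hdi := hd i
  have hsd : 0 < σ * d i := mul_pos hσ hdi
  set c := -(a i + σ * τ) / (σ * d i) with hc
  have hac : a i + σ * τ = -(σ * d i * c) := by
    rw [hc, mul_div_assoc', mul_neg, neg_div, neg_neg, mul_div_cancel_left₀ _ hsd.ne']
  rw [← hτ]
  rcases le_or_gt c 0 with h0 | h0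
  · have hx : xs i = 0 := by
      rw [hxs i, max_eq_left (le_trans (min_le_right _ _) h0)]
    rw [hx]
    have heq : (0:ℝ) - (a i + σ * d i * 0 + σ * τ) = σ * d i * c := by
      linarith
    rw [heq]
    have h1 : σ * d i * c ≤ 0 := mul_nonpos_of_nonneg_of_nonpos hsd.le h0
    rw [min_eq_right (le_trans h1 hb.le), max_eq_left h1]
  · rcases le_or_gt b c with h1 | h1
    · have hx : xs i = b := by
        rw [hxs i, min_eq_left h1, max_eq_right hb.le]
      rw [hx]
      have heq : b - (a i + σ * d i * b + σ * τ) = b + σ * d i * (c - b) := by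
        linarith
      rw [heq]
      have h2 : 0 ≤ σ * d i * (c - b) := mul_nonneg hsd.le (by linarith)
      rw [min_eq_left (by linarith), max_eq_right (by linarith)]
    · have hx : xs i = c := by
        rw [hxs i, min_eq_right h1.le, max_eq_right h0.le]
      rw [hx]
      have heq : c - (a i + σ * d i * c + σ * τ) = c := by
        linarith
      rw [heq, min_eq_right h1.le, max_eq_right h0.le]
end

section
/- Let n ≥ 1, a : Fin n → ℝ, d : Fin n → ℝ with d i > 0 for all i, σ > 0, b > 0, and let τ ∈ ℝ. Define x* : Fin n → ℝ by x* i = max(0, min(b, −(a i + σ·τ)/(σ · d i))), and suppose τ = Σ_i x* i. Then x* is a global minimizer of f(x) = Σ_i a_i x_i + (σ/2) Σ_i d_i x_i² + (σ/2)(Σ_i x_i)² over the box B = {x | 0 ≤ x i ≤ b for all i}: f(x*) ≤ f(y) for all y ∈ B. -/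
/-- If `x*_i = max 0 (min b (-(a_i + στ)/(σ d_i)))` and `τ = Σ_i x*_i`, then `x*` is a
global minimizer of `f(x) = Σ a_i x_i + (σ/2) Σ d_i x_i² + (σ/2)(Σ x_i)²` over the box
`B = {x | 0 ≤ x i ≤ b}`. -/
theorem root_gives_global_minimizer
    (n : ℕ) (hn : 1 ≤ n) (a d : Fin n → ℝ) (hd : ∀ i, 0 < d i)
    (σ b τ : ℝ) (hσ : 0 < σ) (hb : 0 < b)
    (xs : Fin n → ℝ)
    (hxs : ∀ i, xs i = max 0 (min b (-(a i + σ * τ) / (σ * d i))))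
    (hτ : τ = ∑ i, xs i) :
    ∀ y : Fin n → ℝ, (∀ i, 0 ≤ y i ∧ y i ≤ b) →
      (∑ i, a i * xs i + σ / 2 * ∑ i, d i * (xs i) ^ 2 + σ / 2 * (∑ i, xs i) ^ 2) ≤
      (∑ i, a i * y i + σ / 2 * ∑ i, d i * (y i) ^ 2 + σ / 2 * (∑ i, y i) ^ 2) := by
  intro y hy
  -- Per-coordinate first-order (projection) inequality
  have key : ∀ i, 0 ≤ (σ * d i * xs i + (a i + σ * τ)) * (y i - xs i) := by
    intro i
    have hσd : 0 < σ * d i := mul_pos hσ (hd i)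
    set c := -(a i + σ * τ) / (σ * d i) with hc
    have hxi : xs i = max 0 (min b c) := hxs i
    have hcc : σ * d i * c = -(a i + σ * τ) := by
      rw [hc]; field_simp [(hd i).ne', hσ.ne']
    have hfac : σ * d i * xs i + (a i + σ * τ) = σ * d i * (xs i - c) := by
      rw [mul_sub, hcc]; ring
    rw [hfac]
    have hproj : 0 ≤ (xs i - c) * (y i - xs i) := by
      rcases le_total c 0 with h | h
      · have hx0 : xs i = 0 := by
          rw [hxi]
          exact max_eq_left (le_trans (min_le_right _ _) h)
        have hy0 := (hy i).1
        rw [hx0]; nlinarith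
      · rcases le_total b c with h2 | h2
        · have hxb : xs i = b := by
            rw [hxi, min_eq_left h2, max_eq_right hb.le]
          have hyb := (hy i).2
          rw [hxb]; nlinarith
        · have hxc : xs i = c := by
            rw [hxi, min_eq_right h2, max_eq_right h]
          rw [hxc]; simp
    calc (0:ℝ) ≤ σ * d i * ((xs i - c) * (y i - xs i)) := mul_nonneg hσd.le hproj
      _ = σ * d i * (xs i - c) * (y i - xs i) := by ring
  have hK : 0 ≤ ∑ i, (σ * d i * xs i + (a i + σ * τ)) * (y i - xs i) :=
    Finset.sum_nonneg fun i _ => key i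
  have hQ : 0 ≤ ∑ i, d i * (y i - xs i) ^ 2 :=
    Finset.sum_nonneg fun i _ => mul_nonneg (hd i).le (sq_nonneg _)
  -- Algebraic expansion of f(y) - f(xs)
  have core : ∑ i, a i * y i + σ / 2 * ∑ i, d i * (y i) ^ 2
      = ∑ i, a i * xs i + σ / 2 * ∑ i, d i * (xs i) ^ 2
        + ∑ i, ((σ * d i * xs i + a i) * (y i - xs i))
        + σ / 2 * ∑ i, d i * (y i - xs i) ^ 2 := by
    have h : ∑ i, (a i * y i + σ / 2 * (d i * (y i) ^ 2))
        = ∑ i, (a i * xs i + σ / 2 * (d i * (xs i) ^ 2)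
            + ((σ * d i * xs i + a i) * (y i - xs i)
              + σ / 2 * (d i * (y i - xs i) ^ 2))) :=
      Finset.sum_congr rfl fun i _ => by ring
    simpa [Finset.sum_add_distrib, Finset.mul_sum, add_assoc] using h
  have split : ∑ i, (σ * d i * xs i + (a i + σ * τ)) * (y i - xs i)
      = ∑ i, ((σ * d i * xs i + a i) * (y i - xs i))
        + σ * τ * (∑ i, y i - ∑ i, xs i) := by
    have h : ∑ i, (σ * d i * xs i + (a i + σ * τ)) * (y i - xs i)
        = ∑ i, (((σ * d i * xs i + a i) * (y i - xs i))
            + σ * τ * (y i - xs i)) :=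
      Finset.sum_congr rfl fun i _ => by ring
    rw [h, Finset.sum_add_distrib, ← Finset.mul_sum, Finset.sum_sub_distrib]
  have hid : ∑ i, a i * y i + σ / 2 * ∑ i, d i * (y i) ^ 2 + σ / 2 * (∑ i, y i) ^ 2
      = (∑ i, a i * xs i + σ / 2 * ∑ i, d i * (xs i) ^ 2 + σ / 2 * (∑ i, xs i) ^ 2)
        + (∑ i, (σ * d i * xs i + (a i + σ * τ)) * (y i - xs i))
        + σ / 2 * (∑ i, d i * (y i - xs i) ^ 2)
        + σ / 2 * (∑ i, y i - ∑ i, xs i) ^ 2 := by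
    rw [split, hτ]
    linear_combination core
  have hT : 0 ≤ σ / 2 * (∑ i, y i - ∑ i, xs i) ^ 2 :=
    mul_nonneg (by linarith) (sq_nonneg _)
  have hQ' : 0 ≤ σ / 2 * (∑ i, d i * (y i - xs i) ^ 2) :=
    mul_nonneg (by linarith) hQ
  linarith [hid, hK, hQ', hT]
end
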